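/- Let $A \in \mathbb{Q}^{d\times d}$, $\vec{b} \in \mathbb{Q}^d$, $\mathrm{up}(\vec{x}) = A\vec{x} + \vec{b}$, and let $\varphi$ be a conjunction of linear inequalities with rational coefficients over $\vec{x}$. Then $(\exists c \in \mathbb{N}.\ \forall \vec{x} \in \mathbb{R}^d.\ \exists i \le c.\ \neg\varphi(\mathrm{up}^i(\vec{x})))$ holds iff $(\exists c \in \mathbb{N}.\ \forall \vec{x} \in \mathbb{Q}^d.\ \exists i \le c.\ \neg\varphi(\mathrm{up}^i(\vec{x})))$ holds. -/

import Mathlib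

namespace Stmt16


abbrev Cons (n : ℕ) := (Fin n → ℚ) × ℚ × Bool

variable {K : Type*} [Field K] [LinearOrder K] [IsStrictOrderedRing K]

def rel (s : Bool) (p q : K) : Prop := if s then p < q else p ≤ q

lemma rel_trans {s t : Bool} {p q r : K} (h1 : rel s p q) (h2 : rel t q r) :
    rel (s || t) p r := by
  cases s <;> cases t <;> simp only [rel, if_true, if_false, Bool.or_self,
    Bool.false_or, Bool.or_false, Bool.true_or, cond] at * <;>
    first
      | exact h1.trans h2
      | exact h1.trans_lt h2
      | exact h2.trans_le' h1
      | exact lt_of_le_of_lt h1 h2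
      | exact lt_of_lt_of_le h1 h2

lemma rel_sub {s : Bool} {p q : K} : rel s 0 (q - p) ↔ rel s p q := by
  cases s <;> simp [rel, sub_pos, sub_nonneg]

lemma rel_cast {s : Bool} {p q : ℚ} : rel s (p : K) (q : K) ↔ rel s p q := by
  cases s <;> simp [rel]

def val (K : Type*) [Field K] [LinearOrder K] [IsStrictOrderedRing K] {n : ℕ} (t : Cons n) (x : Fin n → K) : K :=
  ∑ j, (t.1 j : K) * x j + (t.2.1 : K)

def OK (K : Type*) [Field K] [LinearOrder K] [IsStrictOrderedRing K] {n : ℕ} (t : Cons n) (x : Fin n → K) : Prop :=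
  rel t.2.2 0 (val K t x)

lemma val_rat {n : ℕ} (t : Cons n) (x : Fin n → ℚ) :
    (val ℚ t x : K) = val K t (fun j => (x j : K)) := by
  rw [val, val]; push_cast; ring

lemma ok_rat {n : ℕ} (t : Cons n) (x : Fin n → ℚ) : OK K t (fun j => (x j : K)) ↔ OK ℚ t x := by
  rw [OK, OK, ← val_rat, show (0:K) = ((0:ℚ):K) by norm_num, rel_cast]

variable {n : ℕ}

def an (t : Cons (n+1)) : ℚ := t.1 (Fin.last n)

def red (t : Cons (n+1)) : Cons n := (fun j => t.1 j.castSucc, t.2.1, t.2.2)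

def comb (t u : Cons (n+1)) : Cons n :=
  (fun j => t.1 j.castSucc / an t - u.1 j.castSucc / an u,
   t.2.1 / an t - u.2.1 / an u, t.2.2 || u.2.2)

lemma val_snoc (t : Cons (n+1)) (x' : Fin n → K) (xn : K) :
    val K t (Fin.snoc x' xn) = val K (red t) x' + (an t : K) * xn := by
  rw [val, val, Fin.sum_univ_castSucc]
  simp [red, an]
  ring

lemma rel_pos_mul {s : Bool} {a V x : K} (ha : 0 < a) :
    rel s 0 (V + a * x) ↔ rel s (-V / a) x := by
  cases s
  · simp only [rel, Bool.false_eq_true, if_false]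
    rw [div_le_iff₀ ha]
    constructor <;> intro <;> nlinarith
  · simp only [rel, if_true]
    rw [div_lt_iff₀ ha]
    constructor <;> intro <;> nlinarith

lemma rel_neg_mul {s : Bool} {a V x : K} (ha : a < 0) :
    rel s 0 (V + a * x) ↔ rel s x (-V / a) := by
  cases s
  · simp only [rel, Bool.false_eq_true, if_false]
    rw [le_div_iff_of_neg ha]
    constructor <;> intro <;> nlinarith
  · simp only [rel, if_true]
    rw [lt_div_iff_of_neg ha]
    constructor <;> intro <;> nlinarith

lemma ok_snoc_zero {t : Cons (n+1)} (h : an t = 0) (x' : Fin n → K) (xn : K) :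
    OK K t (Fin.snoc x' xn) ↔ OK K (red t) x' := by
  rw [OK, OK, val_snoc, h]; norm_num; rfl

lemma ok_snoc_pos {t : Cons (n+1)} (h : 0 < an t) (x' : Fin n → K) (xn : K) :
    OK K t (Fin.snoc x' xn) ↔ rel t.2.2 (-(val K (red t) x') / (an t : K)) xn := by
  rw [OK, val_snoc, rel_pos_mul (by exact_mod_cast h)]

lemma ok_snoc_neg {t : Cons (n+1)} (h : an t < 0) (x' : Fin n → K) (xn : K) :
    OK K t (Fin.snoc x' xn) ↔ rel t.2.2 xn (-(val K (red t) x') / (an t : K)) := by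
  rw [OK, val_snoc, rel_neg_mul (by exact_mod_cast h)]

lemma val_comb (t u : Cons (n+1)) (ht : an t ≠ 0) (hu : an u ≠ 0) (x' : Fin n → K) :
    val K (comb t u) x'
      = -(val K (red u) x') / (an u : K) - -(val K (red t) x') / (an t : K) := by
  have ht' : (an t : K) ≠ 0 := by exact_mod_cast ht
  have hu' : (an u : K) ≠ 0 := by exact_mod_cast hu
  have key : ∑ j, ((t.1 j.castSucc : K)/(an t:K) - (u.1 j.castSucc : K)/(an u:K)) * x' j
       = (∑ j, (t.1 j.castSucc : K) * x' j)/(an t:K)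
         - (∑ j, (u.1 j.castSucc : K) * x' j)/(an u:K) := by
    rw [Finset.sum_div, Finset.sum_div, ← Finset.sum_sub_distrib]
    exact Finset.sum_congr rfl fun j _ => by ring
  rw [val, val, val]
  simp only [comb, red]
  push_cast
  rw [key]
  field_simp
  ring

lemma ok_comb {t u : Cons (n+1)} (ht : an t ≠ 0) (hu : an u ≠ 0) (x' : Fin n → K) :
    OK K (comb t u) x' ↔
      rel (t.2.2 || u.2.2) (-(val K (red t) x') / (an t : K))
        (-(val K (red u) x') / (an u : K)) := by
  rw [OK, val_comb t u ht hu, show (comb t u).2.2 = (t.2.2 || u.2.2) from rfl]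
  cases t.2.2 <;> cases u.2.2 <;> simp [rel, sub_pos, sub_nonneg]

lemma rel_of_lt {s : Bool} {p q : K} (h : p < q) : rel s p q := by
  cases s <;> simp [rel, h, le_of_lt h]

lemma rel_le {s : Bool} {p q : K} (h : rel s p q) : p ≤ q := by
  cases s <;> simp [rel] at h <;> [exact h; exact le_of_lt h]

lemma exists_lt_all (l : List K) : ∃ z : K, ∀ q ∈ l, z < q := by
  induction l with
  | nil => exact ⟨0, by simp⟩
  | cons a l ih =>
    obtain ⟨z, hz⟩ := ih
    refine ⟨min z a - 1, fun q hq => ?_⟩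
    rcases List.mem_cons.mp hq with rfl | hq
    · have := min_le_right z q; linarith
    · have := min_le_left z a; have := hz q hq; linarith

lemma exists_gt_all (l : List K) : ∃ z : K, ∀ q ∈ l, q < z := by
  induction l with
  | nil => exact ⟨0, by simp⟩
  | cons a l ih =>
    obtain ⟨z, hz⟩ := ih
    refine ⟨max z a + 1, fun q hq => ?_⟩
    rcases List.mem_cons.mp hq with rfl | hq
    · have := le_max_right z q; linarith
    · have := le_max_left z a; have := hz q hq; linarith

lemma exists_max {α : Type*} (f : α → K) (l : List α) (h : l ≠ []) :
    ∃ a ∈ l, ∀ b ∈ l, f b ≤ f a := by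
  induction l with
  | nil => exact absurd rfl h
  | cons a l ih =>
    rcases eq_or_ne l [] with rfl | hl
    · exact ⟨a, List.mem_cons_self (a := a) (l := []), by simp⟩
    · obtain ⟨a', ha', hm⟩ := ih hl
      by_cases hc : f a' ≤ f a
      · refine ⟨a, List.mem_cons_self (a := a) (l := l), fun b hb => ?_⟩
        rcases List.mem_cons.mp hb with rfl | hb
        · exact le_refl _
        · exact (hm b hb).trans hc
      · refine ⟨a', List.mem_cons_of_mem a ha', fun b hb => ?_⟩
        rcases List.mem_cons.mp hb with rfl | hb
        · exact le_of_not_ge hc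
        · exact hm b hb

lemma exists_min {α : Type*} (f : α → K) (l : List α) (h : l ≠ []) :
    ∃ a ∈ l, ∀ b ∈ l, f a ≤ f b := by
  obtain ⟨a, ha, hm⟩ := exists_max (fun x => -(f x)) l h
  exact ⟨a, ha, fun b hb => by have := hm b hb; linarith⟩

lemma exists_between (P Q : List (K × Bool))
    (h : ∀ p ∈ P, ∀ q ∈ Q, rel (p.2 || q.2) p.1 q.1) :
    ∃ z : K, (∀ p ∈ P, rel p.2 p.1 z) ∧ (∀ q ∈ Q, rel q.2 z q.1) := by
  rcases eq_or_ne P [] with rfl | hP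
  · obtain ⟨z, hz⟩ := exists_lt_all (Q.map Prod.fst)
    exact ⟨z, by simp, fun q hq => rel_of_lt (hz q.1 (List.mem_map_of_mem (f := Prod.fst) hq))⟩
  rcases eq_or_ne Q [] with rfl | hQ
  · obtain ⟨z, hz⟩ := exists_gt_all (P.map Prod.fst)
    exact ⟨z, fun p hp => rel_of_lt (hz p.1 (List.mem_map_of_mem (f := Prod.fst) hp)), by simp⟩
  obtain ⟨p', hp', hmax⟩ := exists_max Prod.fst P hP
  obtain ⟨q', hq', hmin⟩ := exists_min Prod.fst Q hQ
  have hpq := h p' hp' q' hq'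
  rcases lt_or_eq_of_le (rel_le hpq) with hlt | heq
  · refine ⟨(p'.1 + q'.1) / 2, fun p hp => ?_, fun q hq => ?_⟩
    · exact rel_of_lt (by have := hmax p hp; linarith)
    · exact rel_of_lt (by have := hmin q hq; linarith)
  · refine ⟨p'.1, fun p hp => ?_, fun q hq => ?_⟩
    · have hpp := h p hp q' hq'
      cases hs : p.2
      · simpa [rel] using hmax p hp
      · rw [hs] at hpp; simp only [Bool.true_or, rel, if_true] at hpp
        simp only [rel, if_true]
        rw [heq]; exact hpp
    · have hqq := h p' hp' q hq
      cases hs : q.2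
      · simp only [rel, Bool.false_eq_true, if_false]
        rw [heq]; exact hmin q hq
      · rw [hs] at hqq; simp only [Bool.or_true, rel, if_true] at hqq
        simp only [rel, if_true]
        exact hqq


theorem fm : ∀ (n : ℕ) (L : List (Cons n)),
    (∃ x : Fin n → ℝ, ∀ t ∈ L, OK ℝ t x) → ∃ y : Fin n → ℚ, ∀ t ∈ L, OK ℚ t y := by
  intro n
  induction n with
  | zero =>
    rintro L ⟨x, hx⟩
    have hxy : x = fun j => (((fun _ : Fin 0 => (0:ℚ)) j : ℚ) : ℝ) :=
      funext fun j => j.elim0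
    rw [hxy] at hx
    exact ⟨fun _ => 0, fun t ht => (ok_rat t _).mp (hx t ht)⟩
  | succ n ih =>
    rintro L ⟨x, hx⟩
    have hxs : Fin.snoc (Fin.init x) (x (Fin.last n)) = x := Fin.snoc_init_self x
    set L0 : List (Cons (n+1)) := L.filter fun t => decide (an t = 0) with hL0
    set LP : List (Cons (n+1)) := L.filter fun t => decide (0 < an t) with hLP
    set LN : List (Cons (n+1)) := L.filter fun t => decide (an t < 0) with hLN
    set L' : List (Cons n) :=
      L0.map red ++ (LP.product LN).map (fun p => comb p.1 p.2) with hL'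
    have hx' : ∀ t ∈ L', OK ℝ t (Fin.init x) := by
      intro t ht
      rw [hL', List.mem_append] at ht
      rcases ht with ht | ht
      · obtain ⟨t0, ht0, rfl⟩ := List.mem_map.mp ht
        rw [List.mem_filter] at ht0
        have h0 : an t0 = 0 := by simpa using ht0.2
        exact (ok_snoc_zero h0 (Fin.init x) (x (Fin.last n))).mp (by rw [hxs]; exact hx t0 ht0.1)
      · obtain ⟨⟨t0, u0⟩, htu, rfl⟩ := List.mem_map.mp ht
        obtain ⟨ht0, hu0⟩ := List.mem_product.mp htu
        have hp : 0 < an t0 := by simpa using (List.mem_filter.mp ht0).2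
        have hn : an u0 < 0 := by simpa using (List.mem_filter.mp hu0).2
        have h1 := (ok_snoc_pos hp (Fin.init x) (x (Fin.last n))).mp
          (by rw [hxs]; exact hx t0 (List.mem_filter.mp ht0).1)
        have h2 := (ok_snoc_neg hn (Fin.init x) (x (Fin.last n))).mp
          (by rw [hxs]; exact hx u0 (List.mem_filter.mp hu0).1)
        exact (ok_comb (ne_of_gt hp) (ne_of_lt hn) (Fin.init x)).mpr (rel_trans h1 h2)
    obtain ⟨y', hy'⟩ := ih L' ⟨Fin.init x, hx'⟩
    obtain ⟨z, hzP, hzQ⟩ := exists_between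
      (LP.map fun t => (-(val ℚ (red t) y') / (an t : ℚ), t.2.2))
      (LN.map fun u => (-(val ℚ (red u) y') / (an u : ℚ), u.2.2))
      (by
        rintro p hp q hq
        obtain ⟨t0, ht0, rfl⟩ := List.mem_map.mp hp
        obtain ⟨u0, hu0, rfl⟩ := List.mem_map.mp hq
        have hpc : 0 < an t0 := by simpa using (List.mem_filter.mp ht0).2
        have hnc : an u0 < 0 := by simpa using (List.mem_filter.mp hu0).2
        have hmem : comb t0 u0 ∈ L' := by
          rw [hL', List.mem_append]
          exact Or.inr (List.mem_map.mpr ⟨(t0, u0), List.mem_product.mpr ⟨ht0, hu0⟩, rfl⟩)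
        exact (ok_comb (ne_of_gt hpc) (ne_of_lt hnc) y').mp (hy' _ hmem))
    refine ⟨Fin.snoc y' z, fun t ht => ?_⟩
    rcases lt_trichotomy (an t) 0 with hneg | hzero | hpos
    · have htN : t ∈ LN := List.mem_filter.mpr ⟨ht, by simpa using hneg⟩
      refine (ok_snoc_neg hneg y' z).mpr ?_
      have := hzQ (-(val ℚ (red t) y') / (an t : ℚ), t.2.2)
        (List.mem_map.mpr ⟨t, htN, rfl⟩)
      simpa using this
    · have htL : t ∈ L0 := List.mem_filter.mpr ⟨ht, by simpa using hzero⟩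
      refine (ok_snoc_zero hzero y' z).mpr ?_
      refine hy' (red t) ?_
      rw [hL', List.mem_append]
      exact Or.inl (List.mem_map.mpr ⟨t, htL, rfl⟩)
    · have htP : t ∈ LP := List.mem_filter.mpr ⟨ht, by simpa using hpos⟩
      refine (ok_snoc_pos hpos y' z).mpr ?_
      have := hzP (-(val ℚ (red t) y') / (an t : ℚ), t.2.2)
        (List.mem_map.mpr ⟨t, htP, rfl⟩)
      simpa using this

section Main

variable {d : ℕ} (A : Matrix (Fin d) (Fin d) ℚ) (b : Fin d → ℚ)

/-- accumulated affine offset of the iterated update -/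
def vb : ℕ → (Fin d → ℚ)
  | 0 => 0
  | i+1 => A.mulVec (vb i) + b

lemma iterQ (upQ : (Fin d → ℚ) → (Fin d → ℚ)) (hupQ : ∀ x, upQ x = A.mulVec x + b)
    (i : ℕ) (x : Fin d → ℚ) : upQ^[i] x = (A ^ i).mulVec x + vb A b i := by
  induction i with
  | zero => simp [vb, Matrix.one_mulVec]
  | succ i ihi =>
    rw [Function.iterate_succ_apply', ihi, hupQ, vb, Matrix.mulVec_add,
      Matrix.mulVec_mulVec, ← pow_succ', add_assoc]

lemma mapRat_pow (i : ℕ) : (A.map (fun q => (q : ℝ))) ^ i = (A ^ i).map (fun q => (q : ℝ)) := by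
  have h1 : ∀ M : Matrix (Fin d) (Fin d) ℚ, M.map (fun q => (q : ℝ))
      = (Rat.castHom ℝ).mapMatrix M := fun M => rfl
  rw [h1, h1, ← map_pow]

lemma mulVec_cast (M : Matrix (Fin d) (Fin d) ℚ) (x : Fin d → ℚ) :
    (M.map (fun q => (q : ℝ))).mulVec (fun j => (x j : ℝ)) = fun j => ((M.mulVec x) j : ℝ) := by
  funext j
  simp [Matrix.mulVec, dotProduct, Matrix.map]

lemma iterR (upR : (Fin d → ℝ) → (Fin d → ℝ))
    (hupR : ∀ x, upR x = (A.map (fun q => (q : ℝ))).mulVec x + fun i => (b i : ℝ))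
    (i : ℕ) (x : Fin d → ℝ) :
    upR^[i] x = ((A ^ i).map (fun q => (q : ℝ))).mulVec x + fun j => ((vb A b i) j : ℝ) := by
  induction i with
  | zero =>
    simp only [Function.iterate_zero, id_eq, pow_zero, vb]
    have : (1 : Matrix (Fin d) (Fin d) ℚ).map (fun q => (q : ℝ)) = 1 := by
      have : (1 : Matrix (Fin d) (Fin d) ℚ).map (fun q => (q : ℝ))
          = (Rat.castHom ℝ).mapMatrix 1 := rfl
      rw [this, map_one]
    rw [this, Matrix.one_mulVec]
    funext j; simp [Pi.zero_apply]
  | succ i ihi =>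
    rw [Function.iterate_succ_apply', ihi, hupR, Matrix.mulVec_add,
      Matrix.mulVec_mulVec, ← mapRat_pow, ← pow_succ', mapRat_pow, add_assoc]
    congr 1
    rw [mulVec_cast]
    funext j
    simp [vb]

variable {m : ℕ} (C : Fin m → Fin d → ℚ) (c : Fin m → ℚ) (strict : Fin m → Bool)

/-- the constraint expressing the `k`-th guard inequality after `i` update steps -/
def con (i : ℕ) (k : Fin m) : Cons d :=
  (fun l => ∑ j, C k j * (A ^ i) j l, (∑ j, C k j * vb A b i j) + c k, strict k)

lemma val_conQ (upQ : (Fin d → ℚ) → (Fin d → ℚ)) (hupQ : ∀ x, upQ x = A.mulVec x + b)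
    (i : ℕ) (k : Fin m) (y : Fin d → ℚ) :
    val ℚ (con A b C c strict i k) y = ∑ j, C k j * (upQ^[i] y) j + c k := by
  rw [val, iterQ A b upQ hupQ]
  simp only [con, Rat.cast_id, Matrix.mulVec, dotProduct, Pi.add_apply, mul_add,
    Finset.sum_add_distrib, Finset.mul_sum, Finset.sum_mul]
  rw [Finset.sum_comm]
  ring_nf

lemma val_conR (upR : (Fin d → ℝ) → (Fin d → ℝ))
    (hupR : ∀ x, upR x = (A.map (fun q => (q : ℝ))).mulVec x + fun i => (b i : ℝ))
    (i : ℕ) (k : Fin m) (x : Fin d → ℝ) :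
    val ℝ (con A b C c strict i k) x = ∑ j, (C k j : ℝ) * (upR^[i] x) j + (c k : ℝ) := by
  rw [val, iterR A b upR hupR]
  simp only [con]
  push_cast
  simp only [Matrix.mulVec, dotProduct, Matrix.map_apply, Pi.add_apply, mul_add,
    Finset.sum_add_distrib, Finset.mul_sum, Finset.sum_mul]
  rw [Finset.sum_comm]
  ring_nf

end Main

end Stmt16

open Stmt16 in
/-- A linear loop with rational coefficients has constant runtime over ℝ iff it
has constant runtime over ℚ. The guard is a conjunction of `m` rational linear
inequalities, strict or non-strict. -/
theorem stmt_16 (d m : ℕ) (A : Matrix (Fin d) (Fin d) ℚ) (b : Fin d → ℚ)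
    (C : Fin m → Fin d → ℚ) (c : Fin m → ℚ) (strict : Fin m → Bool)
    (upR : (Fin d → ℝ) → (Fin d → ℝ))
    (hupR : ∀ x, upR x = (A.map (fun q => (q : ℝ))).mulVec x + fun i => (b i : ℝ))
    (upQ : (Fin d → ℚ) → (Fin d → ℚ))
    (hupQ : ∀ x, upQ x = A.mulVec x + b)
    (φR : (Fin d → ℝ) → Prop)
    (hφR : ∀ x, φR x ↔ ∀ i,
      if strict i then 0 < ∑ j, (C i j : ℝ) * x j + (c i : ℝ)
      else 0 ≤ ∑ j, (C i j : ℝ) * x j + (c i : ℝ))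
    (φQ : (Fin d → ℚ) → Prop)
    (hφQ : ∀ x, φQ x ↔ ∀ i,
      if strict i then 0 < ∑ j, C i j * x j + c i
      else 0 ≤ ∑ j, C i j * x j + c i) :
    (∃ cst : ℕ, ∀ x : Fin d → ℝ, ∃ i ≤ cst, ¬ φR (upR^[i] x)) ↔
      (∃ cst : ℕ, ∀ x : Fin d → ℚ, ∃ i ≤ cst, ¬ φQ (upQ^[i] x)) := by
  -- restate the guards in terms of `OK`
  have hφR' : ∀ i (x : Fin d → ℝ),
      φR (upR^[i] x) ↔ ∀ k, OK ℝ (con A b C c strict i k) x := by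
    intro i x
    rw [hφR]
    refine forall_congr' fun k => ?_
    rw [OK, val_conR A b C c strict upR hupR i k x]
    rfl
  have hφQ' : ∀ i (y : Fin d → ℚ),
      φQ (upQ^[i] y) ↔ ∀ k, OK ℚ (con A b C c strict i k) y := by
    intro i y
    rw [hφQ]
    refine forall_congr' fun k => ?_
    rw [OK, val_conQ A b C c strict upQ hupQ i k y]
    rfl
  constructor
  · -- trivial direction: specialize real termination to rational points
    rintro ⟨cst, h⟩
    refine ⟨cst, fun y => ?_⟩
    obtain ⟨i, hic, hn⟩ := h (fun j => (y j : ℝ))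
    refine ⟨i, hic, fun hq => hn ?_⟩
    rw [hφR' i, ← Function.iterate_zero_apply upR (fun j => ((y j : ℚ) : ℝ))]
    intro k
    have hok := (hφQ' i y).mp hq k
    have := (ok_rat (K := ℝ) (con A b C c strict i k) y).mpr hok
    rwa [OK] at this
  · -- main direction, via Fourier–Motzkin
    rintro ⟨cst, h⟩
    refine ⟨cst, fun x => ?_⟩
    by_contra hc
    push_neg at hc
    set Lsys : List (Cons d) :=
      ((List.finRange (cst+1)).product (List.finRange m)).map
        (fun p => con A b C c strict (p.1 : ℕ) p.2) with hLsys
    have hsat : ∀ t ∈ Lsys, OK ℝ t x := by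
      intro t ht
      obtain ⟨⟨i, k⟩, _, rfl⟩ := List.mem_map.mp ht
      exact (hφR' (i : ℕ) x).mp (hc (i : ℕ) (Nat.lt_succ_iff.mp i.isLt)) k
    obtain ⟨y, hy⟩ := fm d Lsys ⟨x, hsat⟩
    obtain ⟨i, hic, hn⟩ := h y
    refine hn ((hφQ' i y).mpr fun k => ?_)
    refine hy (con A b C c strict i k) ?_
    rw [hLsys]
    refine List.mem_map.mpr ⟨(⟨i, Nat.lt_succ_of_le hic⟩, k), ?_, rfl⟩
    exact List.mem_product.mpr ⟨List.mem_finRange _, List.mem_finRange _⟩
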